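/- The average of the squared periodic L₂-discrepancy over all N-element point sets in [0,1)^d, i.e., ∫_{([0,1]^d)^N} (L_{2,N}^per({x_1,...,x_N}))² dx_1...dx_N, equals (1/N)(1/2^d - 1/3^d). -/

import Mathlib

open MeasureTheory

/-- The second Bernoulli polynomial `B₂(x) = x² - x + 1/6`. -/
noncomputable def bern2 (x : ℝ) : ℝ := x^2 - x + 1/6

lemma continuous_bern2 : Continuous bern2 := by unfold bern2; fun_prop

lemma integral_bern2_zero_to (a : ℝ) :
    ∫ t in (0:ℝ)..a, (1/3 + bern2 t) = a/3 + (a^3/3 - a^2/2 + a/6) := by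
  have hd : ∀ t ∈ Set.uIcc (0:ℝ) a,
      HasDerivAt (fun u => u/3 + (u^3/3 - u^2/2 + u/6)) (1/3 + bern2 t) t := by
    intro t _
    have h := ((hasDerivAt_id t).div_const 3).add
      ((((hasDerivAt_pow 3 t).div_const 3).sub ((hasDerivAt_pow 2 t).div_const 2)).add
        ((hasDerivAt_id t).div_const 6))
    refine h.congr_deriv ?_
    simp only [bern2]
    push_cast
    ring
  rw [intervalIntegral.integral_eq_sub_of_hasDerivAt hd
    (by apply Continuous.intervalIntegrable; exact continuous_const.add continuous_bern2)]
  ring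

lemma integral_one_dim (s : ℝ) (hs : s ∈ Set.Icc (0:ℝ) 1) :
    ∫ t in Set.Icc (0:ℝ) 1, (1/3 + bern2 |t - s|) = 1/3 := by
  obtain ⟨hs0, hs1⟩ := hs
  have hcont : Continuous fun t : ℝ => 1/3 + bern2 |t - s| := by
    exact continuous_const.add (continuous_bern2.comp ((continuous_id.sub continuous_const).abs))
  rw [MeasureTheory.integral_Icc_eq_integral_Ioc,
    ← intervalIntegral.integral_of_le (zero_le_one)]
  have hi1 : IntervalIntegrable (fun t : ℝ => 1/3 + bern2 |t - s|) volume 0 s :=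
    hcont.intervalIntegrable _ _
  have hi2 : IntervalIntegrable (fun t : ℝ => 1/3 + bern2 |t - s|) volume s 1 :=
    hcont.intervalIntegrable _ _
  have hsplit := intervalIntegral.integral_add_adjacent_intervals hi1 hi2
  rw [← hsplit]
  have h1 : ∫ t in (0:ℝ)..s, (1/3 + bern2 |t - s|) = ∫ t in (0:ℝ)..s, (1/3 + bern2 (s - t)) := by
    apply intervalIntegral.integral_congr
    intro t ht
    rw [Set.uIcc_of_le hs0] at ht
    show 1/3 + bern2 |t - s| = 1/3 + bern2 (s - t)
    rw [abs_sub_comm, abs_of_nonneg (by linarith [ht.2] : (0:ℝ) ≤ s - t)]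
  have h2 : ∫ t in s..(1:ℝ), (1/3 + bern2 |t - s|) = ∫ t in s..(1:ℝ), (1/3 + bern2 (t - s)) := by
    apply intervalIntegral.integral_congr
    intro t ht
    rw [Set.uIcc_of_le hs1] at ht
    show 1/3 + bern2 |t - s| = 1/3 + bern2 (t - s)
    rw [abs_of_nonneg (by linarith [ht.1] : (0:ℝ) ≤ t - s)]
  rw [h1, h2]
  rw [intervalIntegral.integral_comp_sub_left (fun u => 1/3 + bern2 u) s,
    intervalIntegral.integral_comp_sub_right (fun u => 1/3 + bern2 u) s]
  simp only [sub_self, sub_zero]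
  rw [integral_bern2_zero_to, integral_bern2_zero_to]
  ring

/-- Fubini over a box via indicators. -/
lemma integral_box_prod {d : ℕ} (g : Fin d → ℝ → ℝ) :
    ∫ x in Set.Icc (0:Fin d → ℝ) 1, ∏ j, g j (x j)
      = ∏ j, ∫ t in Set.Icc (0:ℝ) 1, g j t := by
  rw [← integral_indicator measurableSet_Icc]
  have hind : (Set.Icc (0:Fin d → ℝ) 1).indicator (fun x => ∏ j, g j (x j))
      = fun x => ∏ j, (Set.Icc (0:ℝ) 1).indicator (g j) (x j) := by
    funext x
    by_cases h : x ∈ Set.Icc (0:Fin d → ℝ) 1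
    · rw [Set.indicator_of_mem h]
      rw [Set.mem_Icc, Pi.le_def, Pi.le_def] at h
      refine Finset.prod_congr rfl fun j _ =>
        (Set.indicator_of_mem (Set.mem_Icc.2 ⟨h.1 j, h.2 j⟩) _).symm
    · rw [Set.indicator_of_notMem h]
      obtain ⟨j, hj⟩ : ∃ j, x j ∉ Set.Icc (0:ℝ) 1 := by
        by_contra hc
        push_neg at hc
        simp only [Set.mem_Icc] at hc
        exact h (Set.mem_Icc.2 ⟨Pi.le_def.2 fun j => (hc j).1, Pi.le_def.2 fun j => (hc j).2⟩)
      exact (Finset.prod_eq_zero (Finset.mem_univ j) (Set.indicator_of_notMem hj _)).symm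
  rw [hind,
    MeasureTheory.integral_fintype_prod_volume_eq_prod
      (fun j => (Set.Icc (0:ℝ) 1).indicator (g j))]
  exact Finset.prod_congr rfl fun j _ => integral_indicator measurableSet_Icc

/-- Restricting a product measure to a box. -/
lemma pi_restrict {ι : Type*} [Fintype ι] {α : ι → Type*} [∀ i, MeasurableSpace (α i)]
    (μ : ∀ i, Measure (α i)) [∀ i, SigmaFinite (μ i)] (s : ∀ i, Set (α i))
    (hs : ∀ i, MeasurableSet (s i)) :
    Measure.pi (fun i => (μ i).restrict (s i))
      = (Measure.pi μ).restrict (Set.pi Set.univ s) := by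
  refine Measure.pi_eq fun t ht => ?_
  rw [Measure.restrict_apply (MeasurableSet.univ_pi ht), ← Set.pi_inter_distrib, Measure.pi_pi]
  exact Finset.prod_congr rfl fun i _ => (Measure.restrict_apply (ht i)).symm

lemma pi_map_pair {E : Type*} [MeasurableSpace E] (ν : Measure E) [IsProbabilityMeasure ν]
    {N : ℕ} (n m : Fin N) (hnm : n ≠ m) :
    (Measure.pi (fun _ : Fin N => ν)).map (fun X => (X n, X m)) = ν.prod ν := by
  refine (Measure.prod_eq fun s t hs ht => ?_).symm
  rw [Measure.map_apply ((measurable_pi_apply n).prodMk (measurable_pi_apply m)) (hs.prod ht)]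
  have hpre : (fun X : Fin N → E => (X n, X m)) ⁻¹' (s ×ˢ t)
      = Set.pi Set.univ
          (Function.update (Function.update (fun _ : Fin N => (Set.univ : Set E)) n s) m t) := by
    ext X
    simp only [Set.mem_preimage, Set.mem_prod, Set.mem_pi, Set.mem_univ, true_implies]
    constructor
    · rintro ⟨h1, h2⟩ k
      rcases eq_or_ne k m with rfl | hkm
      · simpa using h2
      rcases eq_or_ne k n with rfl | hkn
      · rw [Function.update_of_ne hkm, Function.update_self]; exact h1
      · rw [Function.update_of_ne hkm, Function.update_of_ne hkn]; trivial
    · intro h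
      have h1 := h n
      have h2 := h m
      rw [Function.update_of_ne hnm, Function.update_self] at h1
      rw [Function.update_self] at h2
      exact ⟨h1, h2⟩
  rw [hpre, Measure.pi_pi]
  have hfun : (fun k => ν ((Function.update (Function.update
        (fun _ : Fin N => (Set.univ : Set E)) n s) m t) k))
      = Function.update (Function.update (fun _ : Fin N => ν Set.univ) n (ν s)) m (ν t) := by
    funext k
    rcases eq_or_ne k m with rfl | hkm
    · simp
    rcases eq_or_ne k n with rfl | hkn
    · rw [Function.update_of_ne hkm, Function.update_self,
        Function.update_of_ne hkm, Function.update_self]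
    · rw [Function.update_of_ne hkm, Function.update_of_ne hkn,
        Function.update_of_ne hkm, Function.update_of_ne hkn]
  rw [hfun, Finset.prod_update_of_mem (Finset.mem_univ m),
    Finset.sdiff_singleton_eq_erase,
    Finset.prod_update_of_mem (Finset.mem_erase.2 ⟨hnm, Finset.mem_univ n⟩)]
  simp [mul_comm]

lemma prob_Icc_real : IsProbabilityMeasure (volume.restrict (Set.Icc (0:ℝ) 1)) := by
  constructor
  rw [Measure.restrict_apply_univ, Real.volume_Icc]
  norm_num

lemma restrict_box_pi (d : ℕ) :
    volume.restrict (Set.Icc (0:Fin d → ℝ) 1)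
      = Measure.pi (fun _ : Fin d => volume.restrict (Set.Icc (0:ℝ) 1)) := by
  rw [pi_restrict _ _ (fun _ => measurableSet_Icc)]
  rw [← MeasureTheory.volume_pi]
  congr 1
  exact (Set.pi_univ_Icc (0 : Fin d → ℝ) 1).symm

lemma restrict_bigbox_pi (d N : ℕ) :
    volume.restrict (Set.Icc (0:Fin N → Fin d → ℝ) 1)
      = Measure.pi (fun _ : Fin N => volume.restrict (Set.Icc (0:Fin d → ℝ) 1)) := by
  rw [pi_restrict _ _ (fun _ => measurableSet_Icc)]
  rw [← MeasureTheory.volume_pi]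
  congr 1
  exact (Set.pi_univ_Icc (0 : Fin N → Fin d → ℝ) 1).symm

lemma vol_box (d N : ℕ) : volume (Set.Icc (0:Fin N → Fin d → ℝ) 1) = 1 := by
  haveI := prob_Icc_real
  haveI : IsProbabilityMeasure (volume.restrict (Set.Icc (0:Fin d → ℝ) 1)) := by
    rw [restrict_box_pi]; infer_instance
  rw [← Measure.restrict_apply_univ, restrict_bigbox_pi]
  exact measure_univ

lemma diag_term (d N : ℕ) (n : Fin N) :
    ∫ X in Set.Icc (0:Fin N → Fin d → ℝ) 1,
        ∏ j, ((1:ℝ)/3 + bern2 |X n j - X n j|) = (1/2:ℝ)^d := by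
  have hc : ∀ X : Fin N → Fin d → ℝ,
      (∏ j, ((1:ℝ)/3 + bern2 |X n j - X n j|)) = (1/2:ℝ)^d := by
    intro X
    have : ∀ j : Fin d, ((1:ℝ)/3 + bern2 |X n j - X n j|) = 1/2 := by
      intro j; rw [sub_self, abs_zero]; norm_num [bern2]
    rw [Finset.prod_congr rfl fun j _ => this j, Finset.prod_const, Finset.card_univ,
      Fintype.card_fin]
  simp_rw [hc]
  rw [MeasureTheory.setIntegral_const, measureReal_def, vol_box]
  simp

lemma offdiag_term (d N : ℕ) (n m : Fin N) (hnm : n ≠ m) :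
    ∫ X in Set.Icc (0:Fin N → Fin d → ℝ) 1,
        ∏ j, ((1:ℝ)/3 + bern2 |X n j - X m j|) = (1/3:ℝ)^d := by
  haveI := prob_Icc_real
  haveI hprobν : IsProbabilityMeasure (volume.restrict (Set.Icc (0:Fin d → ℝ) 1)) := by
    rw [restrict_box_pi]; infer_instance
  set ν : Measure (Fin d → ℝ) := volume.restrict (Set.Icc 0 1) with hν
  have hP : volume.restrict (Set.Icc (0:Fin N → Fin d → ℝ) 1)
      = Measure.pi (fun _ : Fin N => ν) := restrict_bigbox_pi d N
  have hφ : Measurable fun X : Fin N → Fin d → ℝ => (X n, X m) :=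
    (measurable_pi_apply n).prodMk (measurable_pi_apply m)
  have hF : Continuous fun p : (Fin d → ℝ) × (Fin d → ℝ) =>
      ∏ j, ((1:ℝ)/3 + bern2 |p.1 j - p.2 j|) := by
    refine continuous_finset_prod _ fun j _ => ?_
    exact continuous_const.add (continuous_bern2.comp
      (((continuous_apply j).comp continuous_fst).sub
        ((continuous_apply j).comp continuous_snd)).abs)
  have hIntF : Integrable (fun p : (Fin d → ℝ) × (Fin d → ℝ) =>
      ∏ j, ((1:ℝ)/3 + bern2 |p.1 j - p.2 j|)) (ν.prod ν) := by
    rw [hν, Measure.prod_restrict, ← Measure.volume_eq_prod]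
    exact hF.continuousOn.integrableOn_compact (isCompact_Icc.prod isCompact_Icc)
  calc ∫ X in Set.Icc (0:Fin N → Fin d → ℝ) 1,
        ∏ j, ((1:ℝ)/3 + bern2 |X n j - X m j|)
      = ∫ p, (∏ j, ((1:ℝ)/3 + bern2 |p.1 j - p.2 j|)) ∂(ν.prod ν) := by
        rw [hP, ← pi_map_pair ν n m hnm,
          integral_map hφ.aemeasurable hF.aestronglyMeasurable]
    _ = ∫ x, (∫ y, (∏ j, ((1:ℝ)/3 + bern2 |x j - y j|)) ∂ν) ∂ν := by
        rw [MeasureTheory.integral_prod _ hIntF]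
    _ = (1/3:ℝ)^d := by
        have hae : ∀ᵐ x ∂ν, (∫ y, (∏ j, ((1:ℝ)/3 + bern2 |x j - y j|)) ∂ν) = (1/3:ℝ)^d := by
          rw [hν]
          filter_upwards [ae_restrict_mem measurableSet_Icc] with x hx
          rw [Set.mem_Icc, Pi.le_def, Pi.le_def] at hx
          rw [integral_box_prod (fun j t => (1:ℝ)/3 + bern2 |x j - t|)]
          have h13 : ∀ j : Fin d, (∫ t in Set.Icc (0:ℝ) 1, ((1:ℝ)/3 + bern2 |x j - t|)) = 1/3 := by
            intro j
            have : (fun t => (1:ℝ)/3 + bern2 |x j - t|) = fun t => (1:ℝ)/3 + bern2 |t - x j| := by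
              funext t; rw [abs_sub_comm]
            rw [this]
            exact integral_one_dim (x j) (Set.mem_Icc.2 ⟨hx.1 j, hx.2 j⟩)
          rw [Finset.prod_congr rfl fun j _ => h13 j, Finset.prod_const, Finset.card_univ,
            Fintype.card_fin]
        rw [integral_congr_ae hae, integral_const, measureReal_def, measure_univ]
        simp

/-- The average of the squared periodic `L₂`-discrepancy (in its Bernoulli-polynomial form)
over all `N`-element point sets in `[0,1]^d` equals `(1/N)(1/2^d - 1/3^d)`. -/
theorem avg_periodicL2sq (d N : ℕ) (hN : 1 ≤ N) :
    ∫ X in Set.Icc (0 : Fin N → Fin d → ℝ) 1,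
        (-(1/3^d) + (1/(N:ℝ)^2) * ∑ n : Fin N, ∑ m : Fin N,
          ∏ j : Fin d, (1/3 + bern2 |X n j - X m j|))
      = (1/(N:ℝ)) * (1/2^d - 1/3^d) := by
  have hNR : (0:ℝ) < N := by exact_mod_cast hN
  have hcontF : ∀ n m : Fin N, Continuous fun X : Fin N → Fin d → ℝ =>
      ∏ j, ((1:ℝ)/3 + bern2 |X n j - X m j|) := by
    intro n m
    refine continuous_finset_prod _ fun j _ => ?_
    exact continuous_const.add (continuous_bern2.comp
      ((continuous_apply_apply n j).sub
        (continuous_apply_apply m j)).abs)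
  have hInt : ∀ n m : Fin N, IntegrableOn
      (fun X : Fin N → Fin d → ℝ => ∏ j, ((1:ℝ)/3 + bern2 |X n j - X m j|))
      (Set.Icc 0 1) volume := fun n m => (hcontF n m).integrableOn_Icc
  have hIntSum : Integrable
      (fun X : Fin N → Fin d → ℝ => (1/(N:ℝ)^2) * ∑ n : Fin N, ∑ m : Fin N,
        ∏ j : Fin d, ((1:ℝ)/3 + bern2 |X n j - X m j|))
      (volume.restrict (Set.Icc 0 1)) := by
    refine Integrable.const_mul ?_ _
    exact integrable_finset_sum _ fun n _ => integrable_finset_sum _ fun m _ => hInt n m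
  have hIntConst : Integrable (fun _ : Fin N → Fin d → ℝ => -(1/3^d : ℝ))
      (volume.restrict (Set.Icc 0 1)) := by
    refine integrableOn_const ?_
    rw [vol_box]
    exact ENNReal.one_ne_top
  rw [MeasureTheory.integral_add hIntConst hIntSum, MeasureTheory.integral_const,
    MeasureTheory.integral_const_mul, MeasureTheory.integral_finset_sum _
      (fun n _ => integrable_finset_sum _ fun m _ => hInt n m)]
  have hterm : ∀ n : Fin N, (∫ X in Set.Icc (0:Fin N → Fin d → ℝ) 1,
      ∑ m : Fin N, ∏ j, ((1:ℝ)/3 + bern2 |X n j - X m j|))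
      = (1/3:ℝ)^d * N + ((1/2:ℝ)^d - (1/3:ℝ)^d) := by
    intro n
    rw [MeasureTheory.integral_finset_sum _ (fun m _ => hInt n m)]
    have h1 : ∀ m : Fin N, (∫ X in Set.Icc (0:Fin N → Fin d → ℝ) 1,
        ∏ j, ((1:ℝ)/3 + bern2 |X n j - X m j|))
        = (1/3:ℝ)^d + (if n = m then ((1/2:ℝ)^d - (1/3:ℝ)^d) else 0) := by
      intro m
      rcases eq_or_ne n m with rfl | hnm
      · rw [diag_term d N n]; simp
      · rw [offdiag_term d N n m hnm]; simp [hnm]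
    rw [Finset.sum_congr rfl fun m _ => h1 m, Finset.sum_add_distrib, Finset.sum_const,
      Finset.card_univ, Fintype.card_fin, Finset.sum_ite_eq, if_pos (Finset.mem_univ n)]
    push_cast
    ring
  rw [Finset.sum_congr rfl fun n _ => hterm n, Finset.sum_const, Finset.card_univ,
    Fintype.card_fin]
  rw [measureReal_def, Measure.restrict_apply_univ, vol_box]
  have h2 : ((1:ℝ)/2)^d = 1/2^d := by rw [div_pow, one_pow]
  have h3 : ((1:ℝ)/3)^d = 1/3^d := by rw [div_pow, one_pow]
  rw [h2, h3]
  simp only [ENNReal.toReal_one, smul_eq_mul, one_mul, nsmul_eq_mul]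
  field_simp
  ring
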